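/- There exists a positive bounded function ν : ℝ → ℝ with period |log β| such that F_{β,p}(x) = x^{log p / log β} · ν(log x) for all 0 < x ≤ 1. -/

import Mathlib

theorem stmt10 (β p q : ℝ) (hβ0 : 0 < β) (hβ : β ≤ 1/2)
    (hp0 : 0 < p) (hp1 : p < 1) (hq : q = 1 - p)
    (hne : ¬(β = 1/2 ∧ p = 1/2))
    (F : ℝ → ℝ) (hmono : Monotone F)
    (hrc : ∀ x : ℝ, ContinuousWithinAt F (Set.Ici x) x)
    (hbot : Filter.Tendsto F Filter.atBot (nhds 0))
    (htop : Filter.Tendsto F Filter.atTop (nhds 1))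
    (hF : ∀ x : ℝ, F x = p * F (x / β) + q * F (x / β + 1 - 1 / β)) :
    ∃ ν : ℝ → ℝ, (∀ t : ℝ, 0 < ν t) ∧ (∃ M : ℝ, ∀ t : ℝ, ν t ≤ M) ∧
      (∀ t : ℝ, ν (t + |Real.log β|) = ν t) ∧
      ∀ x : ℝ, 0 < x → x ≤ 1 →
        F x = x ^ (Real.log p / Real.log β) * ν (Real.log x) := by
  have hβ1 : β < 1 := lt_of_le_of_lt hβ (by norm_num)
  have hβne : β ≠ 0 := ne_of_gt hβ0
  have hq0 : 0 < q := by rw [hq]; linarith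
  have h1β : (1:ℝ) < 1/β := by rw [lt_div_iff₀ hβ0]; linarith
  -- global bounds
  have hFle1 : ∀ x, F x ≤ 1 := fun x =>
    ge_of_tendsto htop ((Filter.eventually_ge_atTop x).mono fun y hy => hmono hy)
  have hFge0 : ∀ x, 0 ≤ F x := fun x =>
    le_of_tendsto hbot ((Filter.eventually_le_atBot x).mono fun y hy => hmono hy)
  -- step on nonpositive reals
  have hstep : ∀ x ≤ 0, F x = F (x / β) := by
    intro x hx
    have h1 : x / β + 1 - 1/β ≤ x / β := by linarith
    have h2 : x / β ≤ x := by
      rw [div_le_iff₀ hβ0]; nlinarith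
    have e := hF x
    have hb : F (x / β + 1 - 1/β) ≤ F (x / β) := hmono h1
    have ha : F (x / β) ≤ F x := hmono h2
    have key : p * F (x / β) + q * F (x / β) = F (x / β) := by rw [hq]; ring
    have hb' : q * F (x / β + 1 - 1/β) ≤ q * F (x / β) :=
      mul_le_mul_of_nonneg_left hb hq0.le
    linarith
  have hiter : ∀ x ≤ 0, ∀ n : ℕ, F x = F (x / β ^ n) := by
    intro x hx n
    induction n with
    | zero => simp
    | succ n ih =>
      have hxn : x / β ^ n ≤ 0 :=
        div_nonpos_of_nonpos_of_nonneg hx (pow_pos hβ0 n).le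
      rw [ih, hstep (x / β ^ n) hxn, div_div, ← pow_succ]
  -- F vanishes on nonpositives
  have hzero : ∀ x ≤ 0, F x = 0 := by
    have hneg : ∀ x < 0, F x = 0 := by
      intro x hx
      have h1 : Filter.Tendsto (fun n : ℕ => (β⁻¹) ^ n) Filter.atTop Filter.atTop :=
        tendsto_pow_atTop_atTop_of_one_lt ((one_lt_inv₀ hβ0).2 hβ1)
      have h2 : Filter.Tendsto (fun n : ℕ => x / β ^ n) Filter.atTop Filter.atBot := by
        have := h1.const_mul_atTop_of_neg hx
        simpa [div_eq_mul_inv, inv_pow] using this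
      have h3 : Filter.Tendsto (fun n : ℕ => F (x / β ^ n)) Filter.atTop (nhds 0) :=
        hbot.comp h2
      have h4 : Filter.Tendsto (fun _ : ℕ => F x) Filter.atTop (nhds 0) := by
        apply h3.congr
        intro n
        exact (hiter x hx.le n).symm
      exact tendsto_nhds_unique tendsto_const_nhds h4
    intro x hx
    rcases lt_or_eq_of_le hx with h | h
    · exact hneg x h
    · subst h
      have e := hF 0
      have h0 : (0:ℝ) / β = 0 := by simp
      rw [h0] at e
      have hlt : (0:ℝ) + 1 - 1/β < 0 := by linarith
      rw [hneg _ hlt, mul_zero, add_zero] at e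
      nlinarith
  -- scaling relation
  have hscale : ∀ y ≤ 1, F (β * y) = p * F y := by
    intro y hy
    have e := hF (β * y)
    have h1 : β * y / β = y := by field_simp
    rw [h1] at e
    have h2 : y + 1 - 1/β ≤ 0 := by
      have : (2:ℝ) ≤ 1/β := by rw [le_div_iff₀ hβ0]; linarith
      linarith
    rw [e, hzero _ h2, mul_zero, add_zero]
  -- F = 1 on [1, ∞)
  have hstep1 : ∀ x, 1 ≤ x → F x = F ((x - 1)/β + 1) := by
    intro x hx
    have e := hF x
    have harg : x/β + 1 - 1/β = (x-1)/β + 1 := by field_simp; ring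
    rw [harg] at e
    have h1 : (x-1)/β + 1 ≤ x/β := by
      have : (x-1)/β + 1/β = x/β := by field_simp; ring
      linarith
    have h2 : x ≤ (x-1)/β + 1 := by
      rw [← sub_le_iff_le_add, le_div_iff₀ hβ0]
      nlinarith
    have ha : F ((x-1)/β + 1) ≤ F (x/β) := hmono h1
    have hb : F x ≤ F ((x-1)/β + 1) := hmono h2
    have key : p * F ((x-1)/β + 1) + q * F ((x-1)/β + 1) = F ((x-1)/β + 1) := by
      rw [hq]; ring
    have ha' : p * F ((x-1)/β + 1) ≤ p * F (x/β) :=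
      mul_le_mul_of_nonneg_left ha hp0.le
    linarith
  have hiter1 : ∀ x, 1 ≤ x → ∀ n : ℕ, F x = F ((x - 1)/β ^ n + 1) := by
    intro x hx n
    induction n with
    | zero => simp
    | succ n ih =>
      have hxn : 1 ≤ (x - 1)/β ^ n + 1 := by
        have : 0 ≤ (x - 1)/β ^ n := div_nonneg (by linarith) (pow_pos hβ0 n).le
        linarith
      rw [ih, hstep1 _ hxn]
      congr 1
      rw [pow_succ]
      field_simp
      ring
  have hone : ∀ x, 1 < x → F x = 1 := by
    intro x hx
    have h1 : Filter.Tendsto (fun n : ℕ => (β⁻¹) ^ n) Filter.atTop Filter.atTop :=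
      tendsto_pow_atTop_atTop_of_one_lt ((one_lt_inv₀ hβ0).2 hβ1)
    have h2 : Filter.Tendsto (fun n : ℕ => (x - 1) / β ^ n + 1) Filter.atTop Filter.atTop := by
      have h2' := h1.const_mul_atTop (by linarith : (0:ℝ) < x - 1)
      have h2'' : Filter.Tendsto (fun n : ℕ => (x - 1) / β ^ n) Filter.atTop Filter.atTop := by
        simpa [div_eq_mul_inv, inv_pow] using h2'
      exact Filter.tendsto_atTop_add_const_right _ 1 h2''
    have h3 : Filter.Tendsto (fun n : ℕ => F ((x - 1) / β ^ n + 1)) Filter.atTop (nhds 1) :=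
      htop.comp h2
    have h4 : Filter.Tendsto (fun _ : ℕ => F x) Filter.atTop (nhds 1) := by
      apply h3.congr
      intro n
      exact (hiter1 x hx.le n).symm
    exact tendsto_nhds_unique tendsto_const_nhds h4
  have hF1 : F 1 = 1 := by
    have h1 : Filter.Tendsto F (nhdsWithin 1 (Set.Ioi 1)) (nhds (F 1)) :=
      (hrc 1).mono_left (nhdsWithin_mono 1 Set.Ioi_subset_Ici_self)
    have h2 : Filter.Tendsto F (nhdsWithin 1 (Set.Ioi 1)) (nhds 1) := by
      refine Filter.Tendsto.congr' ?_ tendsto_const_nhds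
      filter_upwards [self_mem_nhdsWithin] with y hy
      exact (hone y hy).symm
    exact tendsto_nhds_unique h1 h2
  -- positivity of F on positives
  have hpow : ∀ n : ℕ, F (β ^ n) = p ^ n := by
    intro n
    induction n with
    | zero => simpa using hF1
    | succ n ih =>
      have hb : β ^ n ≤ 1 := pow_le_one₀ hβ0.le hβ1.le
      rw [pow_succ, pow_succ, mul_comm (β ^ n) β, hscale _ hb, ih, mul_comm]
  have hFpos : ∀ x, 0 < x → 0 < F x := by
    intro x hx
    obtain ⟨n, hn⟩ : ∃ n : ℕ, β ^ n < x := exists_pow_lt_of_lt_one hx hβ1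
    calc (0:ℝ) < p ^ n := pow_pos hp0 n
    _ = F (β ^ n) := (hpow n).symm
    _ ≤ F x := hmono hn.le
  -- logarithmic setup
  have hlogβ : Real.log β < 0 := Real.log_neg hβ0 hβ1
  have hlogp : Real.log p < 0 := Real.log_neg hp0 hp1
  set L : ℝ := -Real.log β with hLdef
  have hL : 0 < L := by simp only [hLdef]; linarith
  set α : ℝ := Real.log p / Real.log β with hαdef
  have hα : 0 < α := div_pos_of_neg_of_neg hlogp hlogβ
  have hαL : Real.exp (α * L) = p⁻¹ := by
    have hlne : Real.log β ≠ 0 := ne_of_lt hlogβ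
    have : α * L = -Real.log p := by
      rw [hαdef, hLdef]
      field_simp
    rw [this, Real.exp_neg, Real.exp_log hp0]
  set g : ℝ → ℝ := fun t => F (Real.exp t) * Real.exp (-(α * t)) with hgdef
  have gper : ∀ t ≤ 0, g (t - L) = g t := by
    intro t ht
    have h1 : Real.exp (t - L) = β * Real.exp t := by
      rw [Real.exp_sub, hLdef, Real.exp_neg, Real.exp_log hβ0]
      field_simp
    have h2 : Real.exp t ≤ 1 := Real.exp_le_one_iff.mpr ht
    have h3 : Real.exp (-(α * (t - L))) = Real.exp (-(α * t)) * p⁻¹ := by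
      rw [← hαL, ← Real.exp_add]
      congr 1
      ring
    simp only [hgdef]
    rw [h1, hscale _ h2, h3]
    field_simp
  have gshift : ∀ (n : ℕ), ∀ t ≤ 0, g (t - L * n) = g t := by
    intro n
    induction n with
    | zero => intro t _; simp
    | succ n ih =>
      intro t ht
      have h1 : t - L * (n + 1 : ℕ) = (t - L * n) - L := by push_cast; ring
      have h2 : t - L * n ≤ 0 := by
        have : 0 ≤ L * n := mul_nonneg hL.le (Nat.cast_nonneg n)
        linarith
      rw [h1, gper _ h2, ih t ht]
  -- the periodic function
  set s : ℝ → ℝ := fun t => t - L * ⌈t / L⌉ with hsdef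
  have hs_le : ∀ t, s t ≤ 0 := by
    intro t
    have h1 : t / L ≤ (⌈t / L⌉ : ℝ) := Int.le_ceil _
    have h2 : t ≤ L * ⌈t / L⌉ := by
      rw [mul_comm, ← div_le_iff₀ hL]
      exact h1
    simp only [hsdef]
    linarith
  have hs_gt : ∀ t, -L < s t := by
    intro t
    have h1 : (⌈t / L⌉ : ℝ) < t / L + 1 := Int.ceil_lt_add_one _
    have h2 : L * ⌈t / L⌉ < t + L := by
      have := (mul_lt_mul_iff_right₀ hL).mpr h1
      rw [mul_add, mul_one, mul_div_cancel₀ t hL.ne'] at this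
      linarith
    simp only [hsdef]
    linarith
  set ν : ℝ → ℝ := fun t => g (s t) with hνdef
  -- ν agrees with g on nonpositives
  have hνg : ∀ t ≤ 0, ν t = g t := by
    intro t ht
    have hn : ⌈t / L⌉ ≤ 0 := Int.ceil_le.mpr (by exact_mod_cast div_nonpos_of_nonpos_of_nonneg ht hL.le)
    set m : ℕ := (-⌈t / L⌉).toNat with hm
    have hmcast : (m : ℝ) = -(⌈t / L⌉ : ℝ) := by
      rw [hm]
      have : ((-⌈t / L⌉).toNat : ℤ) = -⌈t / L⌉ := Int.toNat_of_nonneg (by omega)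
      exact_mod_cast congrArg (Int.cast : ℤ → ℝ) this
    have ht' : t = s t - L * m := by
      simp only [hsdef]
      rw [hmcast]
      ring
    have := gshift m (s t) (hs_le t)
    rw [hνdef]
    simp only
    rw [← this, ← ht']
  refine ⟨ν, ?_, ⟨Real.exp (α * L), ?_⟩, ?_, ?_⟩
  · -- positivity
    intro t
    exact mul_pos (hFpos _ (Real.exp_pos _)) (Real.exp_pos _)
  · -- boundedness
    intro t
    have h1 : F (Real.exp (s t)) ≤ 1 := hFle1 _
    have h2 : Real.exp (-(α * s t)) ≤ Real.exp (α * L) := by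
      apply Real.exp_le_exp.mpr
      have := hs_gt t
      nlinarith
    calc ν t ≤ 1 * Real.exp (-(α * s t)) :=
          mul_le_mul_of_nonneg_right h1 (Real.exp_pos _).le
      _ = Real.exp (-(α * s t)) := one_mul _
      _ ≤ Real.exp (α * L) := h2
  · -- periodicity
    intro t
    have habs : |Real.log β| = L := by rw [abs_of_neg hlogβ]
    have hdiv : (t + L) / L = t / L + 1 := by field_simp
    have hceil : ⌈(t + L) / L⌉ = ⌈t / L⌉ + 1 := by rw [hdiv, Int.ceil_add_one]
    have hs' : s (t + L) = s t := by
      simp only [hsdef, hceil]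
      push_cast
      ring
    rw [habs]
    simp only [hνdef, hs']
  · -- the representation
    intro x hx hx1
    have hlx : Real.log x ≤ 0 := Real.log_nonpos hx.le hx1
    rw [hνg _ hlx]
    simp only [hgdef]
    rw [Real.exp_log hx]
    rw [Real.rpow_def_of_pos hx]
    have : Real.exp (Real.log x * α) * (F x * Real.exp (-(α * Real.log x))) =
        F x * (Real.exp (Real.log x * α) * Real.exp (-(α * Real.log x))) := by ring
    rw [this, ← Real.exp_add, show Real.log x * α + -(α * Real.log x) = 0 by ring,
      Real.exp_zero, mul_one]
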